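/- Let α ∈ (0,1), ε ∈ (0,1), and let a be a measurable function on (0,1)×(0,T) with |a| ≤ A almost everywhere. Then for every δ > 0 there exists a constant C = C(δ, A, α) (independent of ε) such that for all v(·,t) ∈ H¹₀((0,1)): |∫₀¹ a(x,t) v′(x,t) v(x,t) dx| ≤ δ ∫₀¹ (x+ε)^α |v′(x,t)|² dx + C ∫₀¹ |v(x,t)|² dx. -/

import Mathlib

open MeasureTheory Set

lemma young_aux {p A δ u w : ℝ} (hp : 0 < p) (hδ : 0 < δ) :
    A * (|u| * |w|) ≤ δ/2 * (p * u^2) + A^2/(2*δ) * (p⁻¹ * w^2) := by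
  have h2δp : (0:ℝ) < 2*δ*p := by positivity
  rw [← mul_le_mul_iff_left₀ h2δp, ← sq_abs u, ← sq_abs w]
  generalize |u| = U
  generalize |w| = W
  have hid : (δ/2*(p*U^2) + A^2/(2*δ)*(p⁻¹*W^2)) * (2*δ*p)
      = (δ*p*U - A*W)^2 + A * (U * W) * (2*δ*p) := by
    field_simp
    ring
  rw [hid]
  nlinarith [sq_nonneg (δ*p*U - A*W)]

lemma abs_le_aux (y c : ℝ) (hc : 1 ≤ c) : |y| ≤ (1 + c * y^2)/2 := by
  nlinarith [sq_nonneg (|y| - 1), sq_abs y, sq_nonneg y]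

lemma contOn_rpow (ε c : ℝ) (hε : 0 < ε) :
    ContinuousOn (fun s : ℝ => (s + ε) ^ c) (Set.Ici (0:ℝ)) := by
  intro s hs
  have hsp : s + ε ≠ 0 := by simp only [Set.mem_Ici] at hs; positivity
  have h1 : ContinuousAt (fun s : ℝ => s + ε) s := by fun_prop
  have h2 : ContinuousAt (fun s : ℝ => (s + ε) ^ c) s :=
    ContinuousAt.comp (g := fun y : ℝ => y ^ c) (f := fun s : ℝ => s + ε) (x := s)
      (Real.continuousAt_rpow_const (s + ε) c (Or.inl hsp)) h1
  exact h2.continuousWithinAt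

lemma sup_bound {α ε : ℝ} (hα : α ∈ Set.Ioo (0:ℝ) 1) (hε : 0 < ε) {v v' : ℝ → ℝ}
    (hderiv : ∀ x ∈ Set.Icc (0:ℝ) 1, HasDerivAt v (v' x) x) (hv0 : v 0 = 0)
    (hv'int : IntegrableOn v' (Set.Ioc 0 1))
    (h2 : IntegrableOn (fun s => (s+ε)^α * (v' s)^2) (Set.Ioc 0 1)) :
    ∀ x ∈ Set.Icc (0:ℝ) 1,
      (v x)^2 ≤ x^(1-α)/(1-α) * ∫ s in Set.Ioc (0:ℝ) 1, (s+ε)^α * (v' s)^2 := by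
  obtain ⟨hα0, hα1⟩ := hα
  set E := ∫ s in Set.Ioc (0:ℝ) 1, (s+ε)^α * (v' s)^2 with hE
  have hE0 : 0 ≤ E := setIntegral_nonneg measurableSet_Ioc
    (fun s hs => mul_nonneg (Real.rpow_nonneg (by linarith [hs.1]) _) (sq_nonneg _))
  rintro x ⟨hx0, hx1⟩
  set f : ℝ → ℝ := fun s => (s+ε)^(-(α/2)) with hf
  set g : ℝ → ℝ := fun s => (s+ε)^(α/2) * |v' s| with hg
  set μ := volume.restrict (Set.Ioc (0:ℝ) x) with hμ
  have hx_meas : MeasurableSet (Set.Ioc (0:ℝ) x) := measurableSet_Ioc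
  have hv'x : IntervalIntegrable v' volume 0 x := by
    rw [intervalIntegrable_iff, Set.uIoc_of_le hx0]
    exact hv'int.mono_set (Set.Ioc_subset_Ioc le_rfl hx1)
  have hvx : v x = ∫ s in (0:ℝ)..x, v' s := by
    have := intervalIntegral.integral_eq_sub_of_hasDerivAt (f := v) (f' := v')
      (fun s hs => hderiv s (by
        rw [Set.uIcc_of_le hx0] at hs; exact ⟨hs.1, le_trans hs.2 hx1⟩)) hv'x
    rw [hv0, sub_zero] at this; exact this.symm
  have hfg : ∀ s ∈ Set.Ioc (0:ℝ) x, |v' s| = f s * g s := by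
    intro s hs
    have hsp : 0 < s + ε := by linarith [hs.1]
    have : f s * g s = (s+ε)^(-(α/2) + α/2) * |v' s| := by
      rw [Real.rpow_add hsp]; ring
    rw [this]; norm_num
  have habs : |v x| ≤ ∫ s, f s * g s ∂μ := by
    calc |v x| = |∫ s in (0:ℝ)..x, v' s| := by rw [hvx]
    _ ≤ ∫ s in (0:ℝ)..x, |v' s| := intervalIntegral.abs_integral_le_integral_abs hx0
    _ = ∫ s in Set.Ioc (0:ℝ) x, |v' s| := intervalIntegral.integral_of_le hx0
    _ = ∫ s, f s * g s ∂μ := setIntegral_congr_fun hx_meas hfg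
  have hfm : AEStronglyMeasurable f μ :=
    ((contOn_rpow ε (-(α/2)) hε).mono (fun s hs => le_of_lt hs.1)).aestronglyMeasurable hx_meas
  have hf2m : AEStronglyMeasurable (fun s => (s+ε)^(α/2)) μ :=
    ((contOn_rpow ε (α/2) hε).mono (fun s hs => le_of_lt hs.1)).aestronglyMeasurable hx_meas
  have hvm' : AEStronglyMeasurable v' μ :=
    hv'int.aestronglyMeasurable.mono_measure
      (Measure.restrict_mono (Set.Ioc_subset_Ioc le_rfl hx1) le_rfl)
  have hgm : AEStronglyMeasurable g μ := by
    have hn := hvm'.norm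
    simp only [Real.norm_eq_abs] at hn
    exact hf2m.mul hn
  have heq : ∀ s ∈ Set.Ioc (0:ℝ) x, g s ^ 2 = (s+ε)^α * (v' s)^2 := by
    intro s hs
    have hsp : (0:ℝ) < s + ε := by linarith [hs.1]
    rw [hg, mul_pow, sq_abs, ← Real.rpow_natCast ((s+ε)^(α/2)) 2, ← Real.rpow_mul hsp.le]
    norm_num
  have hf2 : Integrable (fun s => f s ^ 2) μ := by
    refine Integrable.mono (g := fun _ : ℝ => ε^(-α))
      (integrableOn_const measure_Ioc_lt_top.ne) ?_ ?_
    · simp only [sq]; exact hfm.mul hfm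
    · filter_upwards [self_mem_ae_restrict hx_meas] with s hs
      have hsp : (0:ℝ) < s + ε := by linarith [hs.1]
      have hfs : f s ^ 2 = (s+ε)^(-α) := by
        rw [hf, ← Real.rpow_natCast ((s+ε)^(-(α/2))) 2, ← Real.rpow_mul hsp.le]
        norm_num
      rw [Real.norm_eq_abs, Real.norm_eq_abs, hfs,
        abs_of_nonneg (Real.rpow_nonneg hsp.le _),
        abs_of_nonneg (Real.rpow_nonneg hε.le _)]
      exact Real.rpow_le_rpow_of_nonpos hε (by linarith [hs.1]) (by linarith)
  have hg2 : Integrable (fun s => g s ^ 2) μ := by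
    refine ((h2.mono_set (Set.Ioc_subset_Ioc le_rfl hx1)).congr ?_)
    exact (ae_restrict_iff' hx_meas).2 (ae_of_all _ fun s hs => (heq s hs).symm)
  have hconj : Real.HolderConjugate 2 2 := Real.HolderConjugate.two_two
  have hfnn : 0 ≤ᵐ[μ] f := by
    filter_upwards [self_mem_ae_restrict hx_meas] with s hs
    exact Real.rpow_nonneg (by linarith [hs.1]) _
  have hgnn : 0 ≤ᵐ[μ] g := by
    filter_upwards [self_mem_ae_restrict hx_meas] with s hs
    exact mul_nonneg (Real.rpow_nonneg (by linarith [hs.1]) _) (abs_nonneg _)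
  have hMf : MemLp f (ENNReal.ofReal 2) μ := by
    rw [ENNReal.ofReal_ofNat]; exact (memLp_two_iff_integrable_sq hfm).2 hf2
  have hMg : MemLp g (ENNReal.ofReal 2) μ := by
    rw [ENNReal.ofReal_ofNat]; exact (memLp_two_iff_integrable_sq hgm).2 hg2
  have holder := integral_mul_le_Lp_mul_Lq_of_nonneg hconj hfnn hgnn hMf hMg
  simp only [show ((2:ℝ)) = ((2:ℕ):ℝ) by norm_num, Real.rpow_natCast] at holder
  set P := ∫ s, f s ^ 2 ∂μ with hP
  set Q := ∫ s, g s ^ 2 ∂μ with hQdef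
  have hP0 : 0 ≤ P := integral_nonneg (fun s => sq_nonneg _)
  have hQ0 : 0 ≤ Q := integral_nonneg (fun s => sq_nonneg _)
  have hsq : (v x)^2 ≤ P * Q := by
    have h1 : |v x| ≤ P^(((2:ℕ):ℝ))⁻¹ * Q^(((2:ℕ):ℝ))⁻¹ := by
      refine le_trans habs (le_trans ?_ (le_of_eq rfl))
      convert holder using 3 <;> norm_num
      all_goals rfl
    have h2' : (P^(((2:ℕ):ℝ))⁻¹ * Q^(((2:ℕ):ℝ))⁻¹)^2 = P * Q := by
      rw [mul_pow, ← Real.rpow_natCast (P^(((2:ℕ):ℝ))⁻¹) 2,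
        ← Real.rpow_natCast (Q^(((2:ℕ):ℝ))⁻¹) 2,
        ← Real.rpow_mul hP0, ← Real.rpow_mul hQ0]
      norm_num
    calc (v x)^2 = |v x|^2 := (sq_abs _).symm
    _ ≤ (P^(((2:ℕ):ℝ))⁻¹ * Q^(((2:ℕ):ℝ))⁻¹)^2 := by
        apply pow_le_pow_left₀ (abs_nonneg _) h1
    _ = P * Q := h2'
  have hrint : IntegrableOn (fun s : ℝ => s^(-α)) (Set.Ioc 0 x) := by
    have h := intervalIntegral.intervalIntegrable_rpow' (a := 0) (b := x) (r := -α)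
      (by linarith)
    rwa [intervalIntegrable_iff, Set.uIoc_of_le hx0] at h
  have hPle : P ≤ x^(1-α)/(1-α) := by
    have hmono : P ≤ ∫ s in Set.Ioc (0:ℝ) x, s^(-α) := by
      refine setIntegral_mono_on hf2 hrint hx_meas ?_
      intro s hs
      have hsp : (0:ℝ) < s + ε := by linarith [hs.1]
      have hfs : f s ^ 2 = (s+ε)^(-α) := by
        rw [hf, ← Real.rpow_natCast ((s+ε)^(-(α/2))) 2, ← Real.rpow_mul hsp.le]
        norm_num
      rw [hfs]
      exact Real.rpow_le_rpow_of_nonpos hs.1 (by linarith) (by linarith)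
    have hcalc : ∫ s in Set.Ioc (0:ℝ) x, s^(-α) = x^(1-α)/(1-α) := by
      rw [← intervalIntegral.integral_of_le hx0, integral_rpow (Or.inl (by linarith))]
      rw [Real.zero_rpow (by linarith : -α + 1 ≠ 0), show -α + 1 = 1-α by ring, sub_zero]
    linarith
  have hQle : Q ≤ E := by
    have hQ' : Q = ∫ s in Set.Ioc (0:ℝ) x, (s+ε)^α * (v' s)^2 :=
      setIntegral_congr_fun hx_meas (fun s hs => heq s hs)
    rw [hQ']
    refine setIntegral_mono_set h2 ?_ ((Set.Ioc_subset_Ioc le_rfl hx1).eventuallyLE)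
    filter_upwards [self_mem_ae_restrict measurableSet_Ioc] with s hs
    exact mul_nonneg (Real.rpow_nonneg (by linarith [hs.1]) _) (sq_nonneg _)
  calc (v x)^2 ≤ P * Q := hsq
  _ ≤ (x^(1-α)/(1-α)) * E :=
      mul_le_mul hPle hQle hQ0 (div_nonneg (Real.rpow_nonneg hx0 _) (by linarith))


set_option maxHeartbeats 1000000 in
/-- Absorption estimate (2.14): for a bounded coefficient `a`, for every `δ > 0` there
is `C = C(δ,A,α)` independent of `ε`, such that
`|∫ a v′ v| ≤ δ∫(x+ε)^α|v′|² + C∫|v|²` for all `v ∈ H¹₀((0,1))`. -/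
theorem absorption_estimate (α T A : ℝ) (a : ℝ → ℝ → ℝ)
    (hα : α ∈ Set.Ioo (0:ℝ) 1) (hT : 0 < T) (hA : 0 ≤ A)
    (ha : Measurable (Function.uncurry a))
    (hbd : ∀ t ∈ Set.Ioo (0:ℝ) T,
      ∀ᵐ x ∂(volume.restrict (Set.Ioo (0:ℝ) 1)), |a x t| ≤ A) :
    ∀ δ > 0, ∃ C > 0, ∀ ε ∈ Set.Ioo (0:ℝ) 1, ∀ t ∈ Set.Ioo (0:ℝ) T,
      ∀ v v' : ℝ → ℝ,
        (∀ x ∈ Set.Icc (0:ℝ) 1, HasDerivAt v (v' x) x) →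
        v 0 = 0 → v 1 = 0 →
        IntervalIntegrable (fun x => a x t * v' x * v x) volume 0 1 →
        IntervalIntegrable (fun x => (x+ε)^α * (v' x)^2) volume 0 1 →
        IntervalIntegrable (fun x => (v x)^2) volume 0 1 →
        |∫ x in (0:ℝ)..1, a x t * v' x * v x| ≤
          δ * ∫ x in (0:ℝ)..1, (x+ε)^α * (v' x)^2
            + C * ∫ x in (0:ℝ)..1, (v x)^2 := by
  obtain ⟨hα0, hα1⟩ := hα
  intro δ hδ
  set M := A^2/(2*δ) with hMdef
  have hM0 : 0 ≤ M := by positivity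
  have hβ : (0:ℝ) < 1 - α := by linarith
  set γ := 2 - 2*α with hγdef
  have hγ : 0 < γ := by rw [hγdef]; linarith
  set tgt := δ*(1-α)*γ/(2*(M+1)) with htgtdef
  have htgt : 0 < tgt := by rw [htgtdef]; positivity
  set κ := min 1 (tgt^(1/γ)) with hκdef
  have hκ0 : 0 < κ := lt_min one_pos (Real.rpow_pos_of_pos htgt _)
  have hκ1 : κ ≤ 1 := min_le_left _ _
  have hκγ : M * (κ^γ/((1-α)*γ)) ≤ δ/2 := by
    have h1 : κ^γ ≤ tgt := by
      calc κ^γ ≤ (tgt^(1/γ))^γ :=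
            Real.rpow_le_rpow hκ0.le (min_le_right _ _) hγ.le
      _ = tgt := by
            rw [← Real.rpow_mul htgt.le, one_div, inv_mul_cancel₀ hγ.ne', Real.rpow_one]
    have h2 : M * (κ^γ/((1-α)*γ)) ≤ M * (tgt/((1-α)*γ)) := by gcongr
    have h3 : M * (tgt/((1-α)*γ)) = M*δ/(2*(M+1)) := by
      rw [htgtdef]; field_simp
    have h4 : M*δ/(2*(M+1)) ≤ δ/2 := by
      rw [div_le_div_iff₀ (by positivity) two_pos]
      nlinarith
    linarith
  refine ⟨(M * κ^(-α) + 1)/δ, by positivity, ?_⟩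
  rintro ε ⟨hε0, hε1⟩ t ht v v' hderiv hv0 hv1 h1 h2 h3
  have huIoc : Set.uIoc (0:ℝ) 1 = Set.Ioc 0 1 := Set.uIoc_of_le zero_le_one
  have h2' : IntegrableOn (fun s => (s+ε)^α * (v' s)^2) (Set.Ioc 0 1) := by
    rw [intervalIntegrable_iff, huIoc] at h2; exact h2
  have h3' : IntegrableOn (fun s => (v s)^2) (Set.Ioc 0 1) := by
    rw [intervalIntegrable_iff, huIoc] at h3; exact h3
  -- v' is integrable
  have hv'm : AEStronglyMeasurable v' (volume.restrict (Set.Ioc (0:ℝ) 1)) := by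
    have hd : ∀ x ∈ Set.Ioc (0:ℝ) 1, deriv v x = v' x :=
      fun x hx => (hderiv x ⟨hx.1.le, hx.2⟩).deriv
    exact (measurable_deriv v).aestronglyMeasurable.congr
      ((ae_restrict_iff' measurableSet_Ioc).2 (ae_of_all _ hd))
  have hv'int : IntegrableOn v' (Set.Ioc 0 1) := by
    refine Integrable.mono (g := fun s => (1 + ε^(-α)*((s+ε)^α*(v' s)^2))/2)
      ?_ hv'm ?_
    · exact (((integrableOn_const measure_Ioc_lt_top.ne).add
        (h2'.const_mul _)).div_const 2)
    · filter_upwards [self_mem_ae_restrict measurableSet_Ioc] with s hs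
      have hsp : (0:ℝ) < s + ε := by linarith [hs.1]
      have hc : 1 ≤ ε^(-α)*(s+ε)^α := by
        have hh : ε^α ≤ (s+ε)^α :=
          Real.rpow_le_rpow hε0.le (by linarith [hs.1]) hα0.le
        have hinv : ε^(-α)*ε^α = 1 := by
          rw [← Real.rpow_add hε0]; norm_num
        calc (1:ℝ) = ε^(-α)*ε^α := hinv.symm
        _ ≤ ε^(-α)*(s+ε)^α :=
            mul_le_mul_of_nonneg_left hh (Real.rpow_nonneg hε0.le _)
      have hb := abs_le_aux (v' s) (ε^(-α)*(s+ε)^α) hc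
      have hnn : (0:ℝ) ≤ (1 + ε^(-α)*((s+ε)^α*(v' s)^2))/2 := by
        have : (0:ℝ) ≤ ε^(-α)*((s+ε)^α*(v' s)^2) :=
          mul_nonneg (Real.rpow_nonneg hε0.le _)
            (mul_nonneg (Real.rpow_nonneg hsp.le _) (sq_nonneg _))
        linarith
      rw [Real.norm_eq_abs, Real.norm_eq_abs, abs_of_nonneg hnn]
      calc |v' s| ≤ (1 + (ε^(-α)*(s+ε)^α) * (v' s)^2)/2 := hb
      _ = (1 + ε^(-α)*((s+ε)^α*(v' s)^2))/2 := by ring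
  -- E and V
  set E := ∫ x in (0:ℝ)..1, (x+ε)^α*(v' x)^2 with hEdef
  set V := ∫ x in (0:ℝ)..1, (v x)^2 with hVdef
  have hEset : E = ∫ s in Set.Ioc (0:ℝ) 1, (s+ε)^α * (v' s)^2 :=
    intervalIntegral.integral_of_le zero_le_one
  have hE0 : 0 ≤ E := by
    refine intervalIntegral.integral_nonneg zero_le_one (fun u hu => ?_)
    exact mul_nonneg (Real.rpow_nonneg (by linarith [hu.1]) _) (sq_nonneg _)
  have hV0 : 0 ≤ V :=
    intervalIntegral.integral_nonneg zero_le_one (fun u hu => sq_nonneg _)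
  -- key sup bound
  have key := sup_bound ⟨hα0, hα1⟩ hε0 hderiv hv0 hv'int h2'
  rw [← hEset] at key
  -- integrability of the weighted square of v
  have hvm : AEStronglyMeasurable v (volume.restrict (Set.Ioc (0:ℝ) 1)) := by
    have hvc : ContinuousOn v (Set.Ioc 0 1) := fun x hx =>
      (hderiv x ⟨hx.1.le, hx.2⟩).continuousAt.continuousWithinAt
    exact hvc.aestronglyMeasurable measurableSet_Ioc
  have hWii : IntervalIntegrable (fun x => (x+ε)^(-α) * (v x)^2) volume 0 1 := by
    rw [intervalIntegrable_iff, huIoc]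
    refine Integrable.mono (g := fun s => ε^(-α) * (v s)^2) (h3'.const_mul _) ?_ ?_
    · refine AEStronglyMeasurable.mul ?_ (by simp only [sq]; exact hvm.mul hvm)
      exact ((contOn_rpow ε (-α) hε0).mono (fun s hs => hs.1.le)).aestronglyMeasurable
        measurableSet_Ioc
    · filter_upwards [self_mem_ae_restrict measurableSet_Ioc] with s hs
      have hsp : (0:ℝ) < s + ε := by linarith [hs.1]
      rw [Real.norm_eq_abs, Real.norm_eq_abs,
        abs_of_nonneg (mul_nonneg (Real.rpow_nonneg hsp.le _) (sq_nonneg _)),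
        abs_of_nonneg (mul_nonneg (Real.rpow_nonneg hε0.le _) (sq_nonneg _))]
      exact mul_le_mul_of_nonneg_right
        (Real.rpow_le_rpow_of_nonpos hε0 (by linarith [hs.1]) (by linarith))
        (sq_nonneg _)
  -- Step B : Young pointwise + integrate
  have stepB : |∫ x in (0:ℝ)..1, a x t * v' x * v x| ≤
      δ/2 * E + M * ∫ x in (0:ℝ)..1, (x+ε)^(-α)*(v x)^2 := by
    have hg_ii : IntervalIntegrable
        (fun x => δ/2*((x+ε)^α*(v' x)^2) + M*((x+ε)^(-α)*(v x)^2)) volume 0 1 :=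
      (h2.const_mul _).add (hWii.const_mul _)
    have hbd' : ∀ᵐ x ∂volume.restrict (Set.Ioc (0:ℝ) 1), |a x t| ≤ A := by
      have hb := hbd t ht
      rwa [Measure.restrict_congr_set Ioo_ae_eq_Ioc] at hb
    have hbnd : ∀ᵐ x ∂volume.restrict (Set.uIoc (0:ℝ) 1),
        ‖a x t * v' x * v x‖ ≤ δ/2*((x+ε)^α*(v' x)^2) + M*((x+ε)^(-α)*(v x)^2) := by
      rw [huIoc]
      filter_upwards [hbd', self_mem_ae_restrict measurableSet_Ioc] with x hax hx
      have hxp : (0:ℝ) < x + ε := by linarith [hx.1]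
      have hp : 0 < (x+ε)^α := Real.rpow_pos_of_pos hxp α
      have h5 : ‖a x t * v' x * v x‖ ≤ A * (|v' x| * |v x|) := by
        rw [Real.norm_eq_abs, abs_mul, abs_mul, mul_assoc]
        exact mul_le_mul_of_nonneg_right hax (by positivity)
      refine le_trans h5 (le_trans (young_aux hp hδ) ?_)
      rw [← Real.rpow_neg hxp.le, ← hMdef]
    have hnorm := intervalIntegral.norm_integral_le_abs_of_norm_le hbnd hg_ii
    have hnn : 0 ≤ ∫ x in (0:ℝ)..1,
        (δ/2*((x+ε)^α*(v' x)^2) + M*((x+ε)^(-α)*(v x)^2)) := by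
      refine intervalIntegral.integral_nonneg zero_le_one (fun u hu => ?_)
      have hup : (0:ℝ) ≤ u + ε := by linarith [hu.1]
      have := Real.rpow_nonneg hup α
      have := Real.rpow_nonneg hup (-α)
      positivity
    rw [Real.norm_eq_abs] at hnorm
    rw [abs_of_nonneg hnn] at hnorm
    calc |∫ x in (0:ℝ)..1, a x t * v' x * v x|
        ≤ ∫ x in (0:ℝ)..1, (δ/2*((x+ε)^α*(v' x)^2) + M*((x+ε)^(-α)*(v x)^2)) := hnorm
    _ = δ/2 * E + M * ∫ x in (0:ℝ)..1, (x+ε)^(-α)*(v x)^2 := by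
        rw [intervalIntegral.integral_add (h2.const_mul _) (hWii.const_mul _),
          intervalIntegral.integral_const_mul, intervalIntegral.integral_const_mul, hEdef]
  -- Step D : split at κ
  have e1 : IntervalIntegrable (fun x => (x+ε)^(-α) * (v x)^2) volume 0 κ :=
    hWii.mono_set (by
      rw [Set.uIcc_of_le hκ0.le, Set.uIcc_of_le zero_le_one]
      exact Set.Icc_subset_Icc le_rfl hκ1)
  have e2 : IntervalIntegrable (fun x => (x+ε)^(-α) * (v x)^2) volume κ 1 :=
    hWii.mono_set (by
      rw [Set.uIcc_of_le hκ1, Set.uIcc_of_le zero_le_one]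
      exact Set.Icc_subset_Icc hκ0.le le_rfl)
  have hWsplit : (∫ x in (0:ℝ)..1, (x+ε)^(-α)*(v x)^2)
      = (∫ x in (0:ℝ)..κ, (x+ε)^(-α)*(v x)^2) + ∫ x in κ..1, (x+ε)^(-α)*(v x)^2 :=
    (intervalIntegral.integral_add_adjacent_intervals e1 e2).symm
  -- bound on [0,κ]
  have hb1 : (∫ x in (0:ℝ)..κ, (x+ε)^(-α)*(v x)^2) ≤ E/(1-α) * (κ^γ/γ) := by
    have hrii : IntervalIntegrable (fun x : ℝ => E/(1-α) * x^(γ-1)) volume 0 κ :=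
      (intervalIntegral.intervalIntegrable_rpow' (a := 0) (b := κ) (r := γ-1)
        (by rw [hγdef]; linarith)).const_mul _
    have hmono : (∫ x in (0:ℝ)..κ, (x+ε)^(-α)*(v x)^2)
        ≤ ∫ x in (0:ℝ)..κ, E/(1-α) * x^(γ-1) := by
      refine intervalIntegral.integral_mono_on hκ0.le e1 hrii (fun x hx => ?_)
      rcases eq_or_lt_of_le hx.1 with h0 | h0
      · rw [← h0, hv0]
        simp only [ne_eq, OfNat.ofNat_ne_zero, not_false_eq_true, zero_pow, mul_zero]
        exact mul_nonneg (div_nonneg hE0 hβ.le) (Real.rpow_nonneg le_rfl _)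
      · have hx1' : x ≤ 1 := le_trans hx.2 hκ1
        have hkey := key x ⟨hx.1, hx1'⟩
        have hr1 : (x+ε)^(-α) ≤ x^(-α) :=
          Real.rpow_le_rpow_of_nonpos h0 (by linarith) (by linarith)
        calc (x+ε)^(-α)*(v x)^2 ≤ x^(-α) * (x^(1-α)/(1-α) * E) :=
              mul_le_mul hr1 hkey (sq_nonneg _) (Real.rpow_nonneg hx.1 _)
        _ = E/(1-α) * (x^(-α) * x^(1-α)) := by ring
        _ = E/(1-α) * x^(γ-1) := by
              rw [← Real.rpow_add h0, show -α + (1-α) = γ-1 by rw [hγdef]; ring]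
    have hcalc : (∫ x in (0:ℝ)..κ, E/(1-α) * x^(γ-1)) = E/(1-α) * (κ^γ/γ) := by
      rw [intervalIntegral.integral_const_mul,
        integral_rpow (Or.inl (by rw [hγdef]; linarith : (-1:ℝ) < γ-1)),
        show γ-1+1 = γ by ring, Real.zero_rpow hγ.ne', sub_zero]
    linarith
  -- bound on [κ,1]
  have hb2 : (∫ x in κ..1, (x+ε)^(-α)*(v x)^2) ≤ κ^(-α) * V := by
    have hkii : IntervalIntegrable (fun x : ℝ => κ^(-α) * (v x)^2) volume κ 1 :=
      (h3.mono_set (by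
        rw [Set.uIcc_of_le hκ1, Set.uIcc_of_le zero_le_one]
        exact Set.Icc_subset_Icc hκ0.le le_rfl)).const_mul _
    have hmono : (∫ x in κ..1, (x+ε)^(-α)*(v x)^2)
        ≤ ∫ x in κ..1, κ^(-α) * (v x)^2 := by
      refine intervalIntegral.integral_mono_on hκ1 e2 hkii (fun x hx => ?_)
      refine mul_le_mul_of_nonneg_right ?_ (sq_nonneg _)
      exact Real.rpow_le_rpow_of_nonpos hκ0 (by linarith [hx.1]) (by linarith)
    have h3a : IntervalIntegrable (fun x => (v x)^2) volume 0 κ :=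
      h3.mono_set (by
        rw [Set.uIcc_of_le hκ0.le, Set.uIcc_of_le zero_le_one]
        exact Set.Icc_subset_Icc le_rfl hκ1)
    have h3b : IntervalIntegrable (fun x => (v x)^2) volume κ 1 :=
      h3.mono_set (by
        rw [Set.uIcc_of_le hκ1, Set.uIcc_of_le zero_le_one]
        exact Set.Icc_subset_Icc hκ0.le le_rfl)
    have hVsplit : V = (∫ x in (0:ℝ)..κ, (v x)^2) + ∫ x in κ..1, (v x)^2 :=
      (intervalIntegral.integral_add_adjacent_intervals h3a h3b).symm
    have hpos : 0 ≤ ∫ x in (0:ℝ)..κ, (v x)^2 :=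
      intervalIntegral.integral_nonneg hκ0.le (fun u hu => sq_nonneg _)
    have hVle : (∫ x in κ..1, (v x)^2) ≤ V := by linarith
    calc (∫ x in κ..1, (x+ε)^(-α)*(v x)^2) ≤ ∫ x in κ..1, κ^(-α) * (v x)^2 := hmono
    _ = κ^(-α) * ∫ x in κ..1, (v x)^2 := intervalIntegral.integral_const_mul _ _
    _ ≤ κ^(-α) * V :=
        mul_le_mul_of_nonneg_left hVle (Real.rpow_nonneg hκ0.le _)
  -- assemble
  have hfinal1 : M * (∫ x in (0:ℝ)..1, (x+ε)^(-α)*(v x)^2)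
      ≤ δ/2 * E + (M * κ^(-α)) * V := by
    have hc1 : M * (E/(1-α) * (κ^γ/γ)) ≤ δ/2 * E := by
      have : M * (E/(1-α) * (κ^γ/γ)) = (M * (κ^γ/((1-α)*γ))) * E := by
        field_simp
      rw [this]
      exact mul_le_mul_of_nonneg_right hκγ hE0
    have hc2 : M * (κ^(-α) * V) = (M * κ^(-α)) * V := by ring
    calc M * (∫ x in (0:ℝ)..1, (x+ε)^(-α)*(v x)^2)
        = M * ((∫ x in (0:ℝ)..κ, (x+ε)^(-α)*(v x)^2)
            + ∫ x in κ..1, (x+ε)^(-α)*(v x)^2) := by rw [hWsplit]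
    _ ≤ M * (E/(1-α) * (κ^γ/γ) + κ^(-α) * V) := by
        refine mul_le_mul_of_nonneg_left (by linarith) hM0
    _ = M * (E/(1-α) * (κ^γ/γ)) + M * (κ^(-α) * V) := by ring
    _ ≤ δ/2 * E + (M * κ^(-α)) * V := by rw [hc2]; linarith
  have hRHS : δ * ∫ x in (0:ℝ)..1, ((x+ε)^α * (v' x)^2
      + (M * κ^(-α) + 1)/δ * ∫ x in (0:ℝ)..1, (v x)^2)
      = δ * E + (M * κ^(-α) + 1) * V := by
    rw [intervalIntegral.integral_add h2 intervalIntegrable_const,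
      intervalIntegral.integral_const, ← hEdef, ← hVdef]
    simp only [smul_eq_mul, sub_zero, one_mul]
    field_simp
  calc |∫ x in (0:ℝ)..1, a x t * v' x * v x|
      ≤ δ/2 * E + M * ∫ x in (0:ℝ)..1, (x+ε)^(-α)*(v x)^2 := stepB
  _ ≤ δ/2 * E + (δ/2 * E + (M * κ^(-α)) * V) := by linarith
  _ ≤ δ * E + (M * κ^(-α) + 1) * V := by nlinarith
  _ = δ * ∫ x in (0:ℝ)..1, ((x+ε)^α * (v' x)^2
      + (M * κ^(-α) + 1)/δ * ∫ x in (0:ℝ)..1, (v x)^2) := hRHS.symm
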